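/- Let X ∈ ℝ^{n₀×n} have rank n with n ≤ n₀, let P = X(XᵀX)⁻¹Xᵀ be the orthogonal projection onto the column space of X, let J₀ ∈ ℝ^{n₀×n₀} be arbitrary, and set J_∞ = J₀(I − P) + P. Then: (i) every vector in the column space of X is fixed by J_∞, so 1 is an eigenvalue of J_∞ with (geometric) multiplicity at least n; (ii) if moreover the operator norm ‖J₀‖_op < 1, then every complex eigenvalue λ of J_∞ with λ ≠ 1 satisfies |λ| < 1; in particular the eigenvalue 1 has multiplicity exactly n and 1 is the largest eigenvalue norm of J_∞. (This is the paper's Lemma 2 for a 2-layer network with activation σ(x)=αx trained on n examples in the NTK limit.) -/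

import Mathlib

open Matrix
open scoped Matrix.Norms.L2Operator

private lemma sq_sum_mulVec_le {m k : ℕ} (J : Matrix (Fin m) (Fin k) ℝ) (a : Fin k → ℝ) :
    ∑ i, ((J *ᵥ a) i) ^ 2 ≤ ‖J‖ ^ 2 * ∑ i, (a i) ^ 2 := by
  have normE : ∀ (p : ℕ) (u : Fin p → ℝ),
      ‖(EuclideanSpace.equiv (Fin p) ℝ).symm u‖ = Real.sqrt (∑ i, (u i) ^ 2) := by
    intro p u
    rw [EuclideanSpace.norm_eq]
    congr 1
    apply Finset.sum_congr rfl
    intro i _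
    rw [show ((EuclideanSpace.equiv (Fin p) ℝ).symm u) i = u i from rfl, Real.norm_eq_abs, sq_abs]
  have h : ‖(EuclideanSpace.equiv (Fin m) ℝ).symm (J *ᵥ a)‖
      ≤ ‖J‖ * ‖(EuclideanSpace.equiv (Fin k) ℝ).symm a‖ :=
    J.l2_opNorm_mulVec ((EuclideanSpace.equiv (Fin k) ℝ).symm a)
  rw [normE, normE] at h
  have hS1 : (0:ℝ) ≤ ∑ i, ((J *ᵥ a) i) ^ 2 := Finset.sum_nonneg fun i _ => sq_nonneg _
  have hS2 : (0:ℝ) ≤ ∑ i, (a i) ^ 2 := Finset.sum_nonneg fun i _ => sq_nonneg _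
  calc ∑ i, ((J *ᵥ a) i) ^ 2 = (Real.sqrt (∑ i, ((J *ᵥ a) i) ^ 2)) ^ 2 := (Real.sq_sqrt hS1).symm
    _ ≤ (‖J‖ * Real.sqrt (∑ i, (a i) ^ 2)) ^ 2 := by
        apply pow_le_pow_left₀ (Real.sqrt_nonneg _) h
    _ = ‖J‖ ^ 2 * ∑ i, (a i) ^ 2 := by rw [mul_pow, Real.sq_sqrt hS2]

private lemma normSq_sum_mulVec_le {m : ℕ} (J : Matrix (Fin m) (Fin m) ℝ) (w : Fin m → ℂ) :
    ∑ i, Complex.normSq ((J.map (Complex.ofReal : ℝ → ℂ) *ᵥ w) i)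
      ≤ ‖J‖ ^ 2 * ∑ i, Complex.normSq (w i) := by
  have hre : ∀ i, ((J.map (Complex.ofReal : ℝ → ℂ) *ᵥ w) i).re
      = (J *ᵥ fun j => (w j).re) i := by
    intro i
    simp [Matrix.mulVec, dotProduct, Complex.re_sum, Complex.mul_re]
  have him : ∀ i, ((J.map (Complex.ofReal : ℝ → ℂ) *ᵥ w) i).im
      = (J *ᵥ fun j => (w j).im) i := by
    intro i
    simp [Matrix.mulVec, dotProduct, Complex.im_sum, Complex.mul_im]
  have key : ∀ i, Complex.normSq ((J.map (Complex.ofReal : ℝ → ℂ) *ᵥ w) i)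
      = ((J *ᵥ fun j => (w j).re) i) ^ 2 + ((J *ᵥ fun j => (w j).im) i) ^ 2 := by
    intro i
    rw [Complex.normSq_apply, ← hre i, ← him i]; ring
  calc ∑ i, Complex.normSq ((J.map (Complex.ofReal : ℝ → ℂ) *ᵥ w) i)
      = (∑ i, ((J *ᵥ fun j => (w j).re) i) ^ 2) + ∑ i, ((J *ᵥ fun j => (w j).im) i) ^ 2 := by
        simp_rw [key]; rw [Finset.sum_add_distrib]
    _ ≤ ‖J‖ ^ 2 * (∑ j, ((w j).re) ^ 2) + ‖J‖ ^ 2 * ∑ j, ((w j).im) ^ 2 :=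
        add_le_add (sq_sum_mulVec_le J _) (sq_sum_mulVec_le J _)
    _ = ‖J‖ ^ 2 * ∑ i, Complex.normSq (w i) := by
        rw [← mul_add, ← Finset.sum_add_distrib]
        simp [Complex.normSq_apply, pow_two]

private lemma contraction_aux {m : ℕ} (P : Matrix (Fin m) (Fin m) ℝ)
    (hsym : Pᵀ = P) (hidem : P * P = P) (u : Fin m → ℂ) :
    ∑ i, Complex.normSq (((1 - P.map (Complex.ofReal : ℝ → ℂ)) *ᵥ u) i)
      ≤ ∑ i, Complex.normSq (u i) := by
  set Pc := P.map (Complex.ofReal : ℝ → ℂ) with hPcdef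
  have hPcT : Pcᵀ = Pc := by
    ext i j
    have h := congrFun (congrFun hsym i) j
    simp only [Matrix.transpose_apply] at h
    simp [hPcdef, Matrix.map_apply, Matrix.transpose_apply, h]
  have hPcP : Pc * Pc = Pc := by
    ext i j
    have h := congrFun (congrFun hidem i) j
    simp only [Matrix.mul_apply] at h ⊢
    simp only [hPcdef, Matrix.map_apply]
    exact_mod_cast congrArg (Complex.ofReal : ℝ → ℂ) h
  set x := Pc *ᵥ u with hx
  set y := (1 - Pc) *ᵥ u with hy
  have hxy : x + y = u := by
    rw [hx, hy, ← Matrix.add_mulVec]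
    simp
  have ortho : ∀ (A B : Matrix (Fin m) (Fin m) ℂ) (s t : Fin m → ℂ), Aᵀ * B = 0 →
      (A *ᵥ s) ⬝ᵥ (B *ᵥ t) = 0 := by
    intro A B s t h
    rw [Matrix.dotProduct_mulVec, Matrix.vecMul_mulVec, h]
    simp
  have hstar : star x = Pc *ᵥ (star u) := by
    funext i
    simp [hx, Matrix.mulVec, dotProduct, hPcdef, Matrix.map_apply, star_mul',
      Complex.conj_ofReal]
  have hstary : star y = (1 - Pc) *ᵥ (star u) := by
    have : y = u - x := by rw [← hxy]; abel
    rw [this, star_sub, hstar, Matrix.sub_mulVec, Matrix.one_mulVec]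
  have c1 : star x ⬝ᵥ y = 0 := by
    rw [hstar, hy]
    exact ortho _ _ _ _ (by rw [hPcT, mul_sub, mul_one, hPcP, sub_self])
  have c2 : star y ⬝ᵥ x = 0 := by
    rw [hstary, hx]
    refine ortho _ _ _ _ ?_
    rw [Matrix.transpose_sub, Matrix.transpose_one, hPcT, sub_mul, one_mul, hPcP, sub_self]
  have hQ : ∀ z : Fin m → ℂ, star z ⬝ᵥ z = ((∑ i, Complex.normSq (z i) : ℝ) : ℂ) := by
    intro z
    rw [Complex.ofReal_sum]
    apply Finset.sum_congr rfl
    intro i _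
    rw [Pi.star_apply, Complex.star_def, mul_comm, Complex.mul_conj]
  have main : star u ⬝ᵥ u = star x ⬝ᵥ x + star y ⬝ᵥ y := by
    conv_lhs => rw [← hxy]
    rw [star_add, add_dotProduct, dotProduct_add, dotProduct_add, c1, c2]
    ring
  rw [hQ, hQ, hQ] at main
  have main' : (∑ i, Complex.normSq (u i))
      = (∑ i, Complex.normSq (x i)) + ∑ i, Complex.normSq (y i) := by
    exact_mod_cast main
  have hxnn : (0:ℝ) ≤ ∑ i, Complex.normSq (x i) :=
    Finset.sum_nonneg fun i _ => Complex.normSq_nonneg _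
  rw [main']
  linarith

set_option maxHeartbeats 1000000 in
/-- paper's Lemma 2: for `X ∈ ℝ^{n₀×n}` of rank `n ≤ n₀`,
`P = X(XᵀX)⁻¹Xᵀ`, and `J_∞ = J₀(I − P) + P`:
(i) every vector in the column space of `X` is fixed by `J_∞`, so `1` is an eigenvalue of
geometric multiplicity at least `n`; (ii) if `‖J₀‖_op < 1` then every complex eigenvalue
`λ ≠ 1` of `J_∞` satisfies `|λ| < 1`, the multiplicity of the eigenvalue `1` is exactly `n`,
and `1` is the largest eigenvalue norm. -/
theorem jacobian_eigenvalue_one_linear (n₀ n : ℕ) (hn : n ≤ n₀)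
    (X : Matrix (Fin n₀) (Fin n) ℝ) (hX : X.rank = n)
    (J₀ : Matrix (Fin n₀) (Fin n₀) ℝ) :
    ∀ P Jinf : Matrix (Fin n₀) (Fin n₀) ℝ,
      P = X * (Xᵀ * X)⁻¹ * Xᵀ →
      Jinf = J₀ * (1 - P) + P →
      ((∀ y : Fin n → ℝ, Jinf *ᵥ (X *ᵥ y) = X *ᵥ y) ∧
        n ≤ Module.finrank ℝ
          (Module.End.eigenspace (Matrix.toLin' Jinf) (1 : ℝ)) ∧
        (‖J₀‖ < 1 →
          (∀ μ : ℂ, μ ≠ 1 →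
            Module.End.HasEigenvalue
              (Matrix.toLin' (Jinf.map (Complex.ofReal : ℝ → ℂ))) μ → ‖μ‖ < 1) ∧
          Module.finrank ℝ
            (Module.End.eigenspace (Matrix.toLin' Jinf) (1 : ℝ)) = n ∧
          (∀ μ : ℂ,
            Module.End.HasEigenvalue
              (Matrix.toLin' (Jinf.map (Complex.ofReal : ℝ → ℂ))) μ → ‖μ‖ ≤ 1))) := by
  intro P Jinf hP hJinf
  -- invertibility of XᵀX
  have hrank : (Xᵀ * X).rank = Fintype.card (Fin n) := by
    rw [Matrix.rank_transpose_mul_self, hX, Fintype.card_fin]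
  have hrange : LinearMap.range (Xᵀ * X).mulVecLin = ⊤ := by
    apply Submodule.eq_top_of_finrank_eq
    have hdefeq : (Xᵀ * X).rank = Module.finrank ℝ (LinearMap.range (Xᵀ * X).mulVecLin) := rfl
    rw [← hdefeq, hrank, Fintype.card_fin]
    simp [Module.finrank_pi]
  have hsurj : Function.Surjective (Xᵀ * X).mulVecLin := LinearMap.range_eq_top.mp hrange
  have hbij : Function.Bijective ((Xᵀ * X).mulVecLin) :=
    ⟨LinearMap.injective_iff_surjective.mpr hsurj, hsurj⟩
  have hdet : IsUnit (Xᵀ * X).det := by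
    rw [← LinearMap.det_toLin' (Xᵀ * X)]
    have : Matrix.toLin' (Xᵀ * X) = (Xᵀ * X).mulVecLin := Matrix.toLin'_apply' _
    rw [this]
    exact LinearEquiv.isUnit_det' (LinearEquiv.ofBijective _ hbij)
  set K : Matrix (Fin n) (Fin n₀) ℝ := (Xᵀ * X)⁻¹ * Xᵀ with hK
  have hKX : K * X = 1 := by
    rw [hK, Matrix.mul_assoc, Matrix.nonsing_inv_mul _ hdet]
  have hPK : P = X * K := by rw [hP, hK, Matrix.mul_assoc]
  have hPX : P * X = X := by
    rw [hPK, Matrix.mul_assoc, hKX, Matrix.mul_one]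
  have hPP : P * P = P := by
    conv_lhs => rw [hPK]
    rw [Matrix.mul_assoc X K (X * K), ← Matrix.mul_assoc K X K, hKX, Matrix.one_mul, ← hPK]
  have hPT : Pᵀ = P := by
    rw [hP]
    simp only [Matrix.transpose_mul, Matrix.transpose_transpose,
      Matrix.transpose_nonsing_inv, Matrix.transpose_mul, Matrix.transpose_transpose]
    rw [Matrix.mul_assoc]
  have hJX : Jinf * X = X := by
    rw [hJinf, Matrix.add_mul, Matrix.mul_assoc, Matrix.sub_mul, Matrix.one_mul, hPX,
      sub_self, Matrix.mul_zero, zero_add]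
  have fix : ∀ y : Fin n → ℝ, Jinf *ᵥ (X *ᵥ y) = X *ᵥ y := by
    intro y
    rw [Matrix.mulVec_mulVec, hJX]
  -- real eigenspace
  set E := Module.End.eigenspace (Matrix.toLin' Jinf) (1 : ℝ) with hE
  set S := LinearMap.range X.mulVecLin with hS
  have hSfin : Module.finrank ℝ S = n := hX
  have hSE : S ≤ E := by
    rintro v ⟨y, rfl⟩
    rw [Module.End.mem_eigenspace_iff, Matrix.toLin'_apply, one_smul]
    exact fix y
  have hlow : n ≤ Module.finrank ℝ E := by
    rw [← hSfin]
    exact Submodule.finrank_mono hSE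
  refine ⟨fix, hlow, ?_⟩
  intro hJ
  have hJ0 : (0:ℝ) ≤ ‖J₀‖ := norm_nonneg _
  -- real: eigenspace ≤ range
  have hES : E ≤ S := by
    intro v hv
    rw [Module.End.mem_eigenspace_iff, Matrix.toLin'_apply, one_smul] at hv
    set w : Fin n₀ → ℝ := v - P *ᵥ v with hw
    have hJw : J₀ *ᵥ w = w := by
      have h1 : Jinf *ᵥ v = J₀ *ᵥ w + P *ᵥ v := by
        rw [hJinf, Matrix.add_mulVec, ← Matrix.mulVec_mulVec, Matrix.sub_mulVec,
          Matrix.one_mulVec, hw]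
      rw [h1] at hv
      have h2 : J₀ *ᵥ w = v - P *ᵥ v := eq_sub_of_add_eq hv
      rw [h2, hw]
    have hb := sq_sum_mulVec_le J₀ w
    rw [hJw] at hb
    have hSw : (0:ℝ) ≤ ∑ i, (w i) ^ 2 := Finset.sum_nonneg fun i _ => sq_nonneg _
    have hJsq : ‖J₀‖ ^ 2 < 1 := by nlinarith
    have hsum0 : ∑ i, (w i) ^ 2 = 0 := by
      refine le_antisymm ?_ hSw
      by_contra hpos
      push_neg at hpos
      nlinarith [mul_pos (by nlinarith : (0:ℝ) < 1 - ‖J₀‖ ^ 2) hpos]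
    have hw0 : w = 0 := by
      funext i
      have h0 := (Finset.sum_eq_zero_iff_of_nonneg (fun i _ => sq_nonneg (w i))).mp hsum0 i
        (Finset.mem_univ i)
      exact (pow_eq_zero_iff two_ne_zero).mp h0
    have hvP : v = P *ᵥ v := by
      have := sub_eq_zero.mp (hw ▸ hw0 : v - P *ᵥ v = 0)
      exact this
    refine ⟨K *ᵥ v, ?_⟩
    rw [Matrix.mulVecLin_apply, Matrix.mulVec_mulVec, ← hPK]
    exact hvP.symm
  have hEfin : Module.finrank ℝ E = n :=
    le_antisymm ((Submodule.finrank_mono hES).trans_eq hSfin) hlow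
  -- complex part
  set Pc : Matrix (Fin n₀) (Fin n₀) ℂ := P.map (Complex.ofReal : ℝ → ℂ) with hPc
  set J₀c : Matrix (Fin n₀) (Fin n₀) ℂ := J₀.map (Complex.ofReal : ℝ → ℂ) with hJ₀c
  set Jc : Matrix (Fin n₀) (Fin n₀) ℂ := Jinf.map (Complex.ofReal : ℝ → ℂ) with hJc
  have hPcP : Pc * Pc = Pc := by
    ext i j
    have h := congrFun (congrFun hPP i) j
    simp only [Matrix.mul_apply] at h ⊢
    simp only [hPc, Matrix.map_apply]
    exact_mod_cast congrArg (Complex.ofReal : ℝ → ℂ) h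
  have hJcEq : Jc = J₀c * (1 - Pc) + Pc := by
    have hm : ∀ A : Matrix (Fin n₀) (Fin n₀) ℝ,
        A.map (Complex.ofReal : ℝ → ℂ) = Complex.ofRealHom.mapMatrix A := fun _ => rfl
    rw [hJc, hJ₀c, hPc, hm, hm, hm, hJinf, _root_.map_add, _root_.map_mul, _root_.map_sub, _root_.map_one]
  have key : ∀ μ : ℂ, Module.End.HasEigenvalue (Matrix.toLin' Jc) μ → μ = 1 ∨ ‖μ‖ < 1 := by
    intro μ hμ
    obtain ⟨v, hv⟩ := hμ.exists_hasEigenvector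
    have hv1 : Jc *ᵥ v = μ • v := by
      have h := hv.apply_eq_smul
      rwa [Matrix.toLin'_apply] at h
    have hv0 : v ≠ 0 := hv.2
    set w : Fin n₀ → ℂ := (1 - Pc) *ᵥ v with hwdef
    have hwslide : μ • w = (1 - Pc) *ᵥ (J₀c *ᵥ w) := by
      have hzero : (1 - Pc) * Pc = 0 := by
        rw [sub_mul, one_mul, hPcP, sub_self]
      have h2 : (1 - Pc) * Jc = (1 - Pc) * J₀c * (1 - Pc) := by
        rw [hJcEq, mul_add, hzero, add_zero, ← Matrix.mul_assoc]
      calc μ • w = (1 - Pc) *ᵥ (μ • v) := by rw [Matrix.mulVec_smul]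
        _ = (1 - Pc) *ᵥ (Jc *ᵥ v) := by rw [hv1]
        _ = ((1 - Pc) * Jc) *ᵥ v := by rw [Matrix.mulVec_mulVec]
        _ = ((1 - Pc) * J₀c * (1 - Pc)) *ᵥ v := by rw [h2]
        _ = (1 - Pc) *ᵥ (J₀c *ᵥ ((1 - Pc) *ᵥ v)) := by
            rw [← Matrix.mulVec_mulVec, ← Matrix.mulVec_mulVec]
    by_cases hw0 : w = 0
    · left
      have hPv : Pc *ᵥ v = v := by
        have hsub : (1 - Pc) *ᵥ v = v - Pc *ᵥ v := by
          rw [Matrix.sub_mulVec, Matrix.one_mulVec]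
        have h0 : v - Pc *ᵥ v = 0 := by rw [← hsub, ← hwdef, hw0]
        exact (sub_eq_zero.mp h0).symm
      have hJv : Jc *ᵥ v = v := by
        rw [hJcEq, Matrix.add_mulVec, ← Matrix.mulVec_mulVec, ← hwdef, hw0,
          Matrix.mulVec_zero, zero_add, hPv]
      rw [hv1] at hJv
      have : (μ - 1) • v = 0 := by
        rw [sub_smul, one_smul, hJv, sub_self]
      rcases smul_eq_zero.mp this with h | h
      · exact sub_eq_zero.mp h
      · exact absurd h hv0
    · right
      have hQw : (0:ℝ) < ∑ i, Complex.normSq (w i) := by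
        obtain ⟨i, hi⟩ := Function.ne_iff.mp hw0
        apply Finset.sum_pos' (fun i _ => Complex.normSq_nonneg _)
        exact ⟨i, Finset.mem_univ i, Complex.normSq_pos.mpr (by simpa using hi)⟩
      have h1 : ∑ i, Complex.normSq ((μ • w) i) = ‖μ‖ ^ 2 * ∑ i, Complex.normSq (w i) := by
        simp only [Pi.smul_apply, smul_eq_mul, Complex.normSq_mul]
        rw [← Finset.mul_sum]
        congr 1
        rw [← Complex.sq_norm]
      have h2 := contraction_aux P hPT hPP (J₀c *ᵥ w)
      have h3 := normSq_sum_mulVec_le J₀ w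
      rw [hwslide] at h1
      have hchain : ‖μ‖ ^ 2 * ∑ i, Complex.normSq (w i) ≤ ‖J₀‖ ^ 2 * ∑ i, Complex.normSq (w i) := by
        rw [← h1]
        exact le_trans (by simpa [hPc] using h2) (by simpa [hJ₀c] using h3)
      have hsq : ‖μ‖ ^ 2 ≤ ‖J₀‖ ^ 2 := le_of_mul_le_mul_right hchain hQw
      nlinarith [norm_nonneg μ]
  refine ⟨?_, hEfin, ?_⟩
  · intro μ hμ1 hμ
    rcases key μ hμ with h | h
    · exact absurd h hμ1
    · exact h
  · intro μ hμ
    rcases key μ hμ with h | h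
    · rw [h, norm_one]
    · exact le_of_lt h
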